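/- Let k be an algebraically closed field of characteristic 0 or of characteristic greater than n, and let 1 ≤ s ≤ t ≤ n be integers. Fix constants c_1, …, c_t ∈ k. Then the set of tuples (w_1, …, w_n) ∈ k^n such that the set {w_1, …, w_n} has at most s distinct elements and e_n^j(w_1, …, w_n) = c_j for every 1 ≤ j ≤ t, is a finite set. -/

import Mathlib

set_option maxHeartbeats 1000000
set_option linter.unusedVariables false
set_option linter.unusedTactic false

open Finset MvPolynomial

section Aux

variable {k : Type*} [Field k] {ι : Type*} [Fintype ι] [DecidableEq ι]

/-- If the weighted power sums of degrees `1..s` of `x` all vanish, and every nonempty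
subset-sum of the weights is nonzero in `k`, then `x = 0`. -/
lemma weighted_psum_zero {k : Type*} [Field k] {ι : Type*} [Fintype ι] [DecidableEq ι]
    (s : ℕ) (hcard : Fintype.card ι ≤ s) (m : ι → ℕ)
    (hm : ∀ u : Finset ι, u.Nonempty → ((∑ l ∈ u, m l : ℕ) : k) ≠ 0)
    (x : ι → k) (hx : ∀ j : ℕ, 1 ≤ j → j ≤ s → ∑ l, (m l : k) * x l ^ j = 0) :
    x = 0 := by
  classical
  set F : Finset k := (Finset.image x Finset.univ).erase 0 with hF
  set p : ℕ := F.card with hp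
  have hps : p ≤ s := le_trans (le_trans (Finset.card_erase_le)
    (Finset.card_image_le.trans (Finset.card_le_univ _))) hcard
  -- weighted sums over distinct nonzero values vanish
  have key : ∀ j : ℕ, 1 ≤ j → j ≤ s →
      ∑ z ∈ F, ((∑ l ∈ Finset.univ.filter (fun l => x l = z), m l : ℕ) : k) * z ^ j = 0 := by
    intro j h1 h2
    have := hx j h1 h2
    rw [← Finset.sum_fiberwise_of_maps_to (g := x) (t := Finset.image x Finset.univ)
      (fun l _ => Finset.mem_image_of_mem x (Finset.mem_univ l))] at this
    -- sum over image y of ∑_{x l = y} m l * x l ^ j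
    have himg : ∀ z ∈ Finset.image x Finset.univ,
        (∑ l ∈ Finset.univ.filter (fun l => x l = z), (m l : k) * x l ^ j)
          = ((∑ l ∈ Finset.univ.filter (fun l => x l = z), m l : ℕ) : k) * z ^ j := by
      intro z _
      rw [Nat.cast_sum, Finset.sum_mul]
      apply Finset.sum_congr rfl
      intro l hl
      rw [Finset.mem_filter] at hl
      rw [hl.2]
    rw [Finset.sum_congr rfl himg] at this
    -- split off 0
    by_cases h0 : (0 : k) ∈ Finset.image x Finset.univ
    · rw [← Finset.add_sum_erase _ _ h0] at this
      rw [zero_pow (by omega), mul_zero, zero_add] at this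
      exact this
    · rw [hF, Finset.erase_eq_of_notMem h0]
      exact this
  -- Vandermonde: the weights over F vanish
  have hFempty : F = ∅ := by
    by_contra hne
    -- set up matrix
    have e := F.equivFin
    set z : Fin p → k := fun q => ((e.symm q : F) : k) with hz
    have hzF : ∀ q, z q ∈ F := fun q => (e.symm q).2
    have hzne : ∀ q, z q ≠ 0 := fun q => Finset.ne_of_mem_erase (hzF q)
    have hzinj : Function.Injective z := fun a b hab => by
      apply e.symm.injective; exact Subtype.ext hab
    set M : Fin p → k := fun q =>
      ((∑ l ∈ Finset.univ.filter (fun l => x l = z q), m l : ℕ) : k) with hM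
    set A : Matrix (Fin p) (Fin p) k := Matrix.of fun i q => z q ^ ((i : ℕ) + 1) with hA
    have hmul : A.mulVec M = 0 := by
      funext i
      have := key ((i : ℕ) + 1) (by omega) (by have := i.2; omega)
      rw [Matrix.mulVec]
      simp only [dotProduct, hA, Matrix.of_apply, Pi.zero_apply]
      rw [← this]
      rw [← Finset.sum_coe_sort F (fun zz => ((∑ l ∈ Finset.univ.filter (fun l => x l = zz), m l : ℕ) : k) * zz ^ ((i : ℕ) + 1)),
        ← Equiv.sum_comp e.symm (fun zz : F => ((∑ l ∈ Finset.univ.filter (fun l => x l = (zz : k)), m l : ℕ) : k) * (zz : k) ^ ((i : ℕ) + 1))]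
      apply Finset.sum_congr rfl
      intro q _
      rw [mul_comm]
    have hdet : A.det ≠ 0 := by
      have hAB : A = Matrix.of fun (i q : Fin p) =>
          z q * (Matrix.transpose (Matrix.vandermonde z)) i q := by
        funext i q
        simp [hA, Matrix.vandermonde, Matrix.transpose_apply, pow_succ, mul_comm]
      rw [hAB, Matrix.det_mul_row]
      apply mul_ne_zero
      · exact Finset.prod_ne_zero_iff.mpr fun q _ => hzne q
      · rw [Matrix.det_transpose, Matrix.det_vandermonde]
        apply Finset.prod_ne_zero_iff.mpr
        intro i _
        apply Finset.prod_ne_zero_iff.mpr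
        intro j hj
        exact sub_ne_zero_of_ne fun hh => (Finset.mem_Ioi.mp hj).ne' (hzinj hh)
    have hM0 : M = 0 := Matrix.eq_zero_of_mulVec_eq_zero hdet hmul
    have hppos : 0 < p := Finset.card_pos.mpr (Finset.nonempty_of_ne_empty hne)
    set q0 : Fin p := ⟨0, hppos⟩
    have hz0 : z q0 ∈ F := hzF q0
    obtain ⟨l0, -, hl0⟩ := Finset.mem_image.mp (Finset.mem_of_mem_erase hz0)
    have hMq0 : M q0 = 0 := by rw [hM0]; rfl
    refine hm (Finset.univ.filter (fun l => x l = z q0)) ⟨l0, ?_⟩ hMq0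
    exact Finset.mem_filter.mpr ⟨Finset.mem_univ _, hl0⟩
  -- conclude
  funext l
  by_contra hxl
  have : x l ∈ F := Finset.mem_erase.mpr ⟨hxl, Finset.mem_image_of_mem x (Finset.mem_univ l)⟩
  rw [hFempty] at this
  exact absurd this (Finset.notMem_empty _)

omit [Fintype ι] [DecidableEq ι] in
/-- homogeneous component of a product with a homogeneous polynomial -/
lemma homogeneousComponent_mul_isHomogeneous {g : MvPolynomial ι k} {j N : ℕ}
    (hg : g.IsHomogeneous j) (f : MvPolynomial ι k) (hjN : j ≤ N) :
    homogeneousComponent N (f * g) = homogeneousComponent (N - j) f * g := by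
  conv_lhs => rw [← sum_homogeneousComponent f, Finset.sum_mul, map_sum]
  have hterm : ∀ d : ℕ, homogeneousComponent N (homogeneousComponent d f * g)
      = if d = N - j then homogeneousComponent d f * g else 0 := by
    intro d
    have h1 : (homogeneousComponent d f * g).IsHomogeneous (d + j) :=
      (homogeneousComponent_isHomogeneous d f).mul hg
    rw [homogeneousComponent_of_mem ((mem_homogeneousSubmodule _ _).mpr h1)]
    by_cases hd : d = N - j
    · rw [if_pos (by omega), if_pos hd]
    · rw [if_neg (by omega), if_neg hd]
  rw [Finset.sum_congr rfl fun d _ => hterm d]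
  rw [Finset.sum_ite_eq' (Finset.range (f.totalDegree + 1)) (N - j)
    (fun d => homogeneousComponent d f * g)]
  by_cases h : N - j ∈ Finset.range (f.totalDegree + 1)
  · rw [if_pos h]
  · rw [if_neg h]
    rw [Finset.mem_range, not_lt] at h
    rw [homogeneousComponent_eq_zero _ _ (by omega), zero_mul]

lemma exists_reduction [IsAlgClosed k]
    (s : ℕ) (hs : 1 ≤ s) (hcard : Fintype.card ι ≤ s) (m : ι → ℕ)
    (hm : ∀ u : Finset ι, u.Nonempty → ((∑ l ∈ u, m l : ℕ) : k) ≠ 0) (d : ℕ → k) :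
    ∃ N : ℕ, 0 < N ∧ ∀ l : ι, ∃ ρ : MvPolynomial ι k, ρ.totalDegree < N ∧
      X l ^ N - ρ ∈ Ideal.span (Set.range (fun j : ↥(Finset.Icc 1 s) =>
        (∑ l', C ((m l' : k)) * X l' ^ (j : ℕ)) - C (d (j : ℕ)))) := by
  classical
  set q : ℕ → MvPolynomial ι k := fun j => ∑ l', C ((m l' : k)) * X l' ^ j with hq
  have hqhom : ∀ j : ℕ, (q j).IsHomogeneous j := fun j =>
    IsHomogeneous.sum _ _ _ fun l' _ => isHomogeneous_C_mul_X_pow _ _ _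
  set J : Ideal (MvPolynomial ι k) :=
    Ideal.span (Set.range fun j : ↥(Finset.Icc 1 s) => q (j : ℕ)) with hJ
  -- every variable is in the radical of J
  have hrad : ∀ l : ι, X l ∈ J.radical := by
    intro l
    rw [← vanishingIdeal_zeroLocus_eq_radical (K := k)]
    rw [mem_vanishingIdeal_iff]
    intro x hx
    have hx0 : x = 0 := by
      apply weighted_psum_zero s hcard m hm
      intro j h1 h2
      have hqj : q j ∈ J := Ideal.subset_span ⟨⟨j, Finset.mem_Icc.mpr ⟨h1, h2⟩⟩, rfl⟩
      have := hx _ hqj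
      rw [hq] at this
      simpa [eval_sum] using this
    rw [hx0]
    simp
  choose Nl hNl using fun l => Ideal.mem_radical_iff.mp (hrad l)
  set N : ℕ := (Finset.univ.sup Nl) + s + 1 with hN
  refine ⟨N, by omega, fun l => ?_⟩
  have hXN : X (R := k) l ^ N ∈ J := by
    have hle : Nl l ≤ N := le_trans (Finset.le_sup (Finset.mem_univ l)) (by omega)
    have : X (R := k) l ^ N = X l ^ Nl l * X l ^ (N - Nl l) := by
      rw [← pow_add]; congr 1; omega
    rw [this]
    exact Ideal.mul_mem_right _ _ (hNl l)
  rw [hJ, Ideal.mem_span_range_iff_exists_fun] at hXN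
  obtain ⟨f, hf⟩ := hXN
  -- take degree-N homogeneous components
  have hcomp := congrArg (homogeneousComponent N) hf
  rw [map_sum] at hcomp
  have hterm : ∀ j : ↥(Finset.Icc 1 s),
      homogeneousComponent N (f j * q (j : ℕ))
        = homogeneousComponent (N - (j : ℕ)) (f j) * q (j : ℕ) := by
    intro j
    have hj := Finset.mem_Icc.mp j.2
    exact homogeneousComponent_mul_isHomogeneous (hqhom _) _ (by omega)
  rw [Finset.sum_congr rfl fun j _ => hterm j] at hcomp
  rw [homogeneousComponent_of_mem
    ((mem_homogeneousSubmodule _ _).mpr (isHomogeneous_X_pow l N)), if_pos rfl] at hcomp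
  -- define the remainder
  refine ⟨∑ j : ↥(Finset.Icc 1 s),
      homogeneousComponent (N - (j : ℕ)) (f j) * C (d (j : ℕ)), ?_, ?_⟩
  · have : ∀ j : ↥(Finset.Icc 1 s),
        (homogeneousComponent (N - (j : ℕ)) (f j) * C (d (j : ℕ))).totalDegree ≤ N - 1 := by
      intro j
      have hj := Finset.mem_Icc.mp j.2
      calc (homogeneousComponent (N - (j : ℕ)) (f j) * C (d (j : ℕ))).totalDegree
          ≤ _ + _ := totalDegree_mul _ _
        _ ≤ (N - (j : ℕ)) + 0 := by
            gcongr
            · exact (homogeneousComponent_isHomogeneous _ _).totalDegree_le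
            · exact le_of_eq (totalDegree_C _)
        _ ≤ N - 1 := by omega
    calc (∑ j : ↥(Finset.Icc 1 s),
        homogeneousComponent (N - (j : ℕ)) (f j) * C (d (j : ℕ))).totalDegree
        ≤ Finset.univ.sup (fun j : ↥(Finset.Icc 1 s) =>
            (homogeneousComponent (N - (j : ℕ)) (f j) * C (d (j : ℕ))).totalDegree) :=
          totalDegree_finset_sum _ _
      _ ≤ N - 1 := Finset.sup_le fun j _ => this j
      _ < N := by omega
  · have hsplit : X (R := k) l ^ N - ∑ j : ↥(Finset.Icc 1 s),
        homogeneousComponent (N - (j : ℕ)) (f j) * C (d (j : ℕ))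
        = ∑ j : ↥(Finset.Icc 1 s),
            homogeneousComponent (N - (j : ℕ)) (f j) * (q (j : ℕ) - C (d (j : ℕ))) := by
      rw [← hcomp, ← Finset.sum_sub_distrib]
      apply Finset.sum_congr rfl
      intro j _
      rw [mul_sub]
    rw [hsplit]
    apply Ideal.sum_mem
    intro j _
    exact Ideal.mul_mem_left _ _ (Ideal.subset_span ⟨j, rfl⟩)

omit [Fintype ι] [DecidableEq ι] in
lemma degree_sum_eq (α : ι →₀ ℕ) : (α.sum fun _ e => e) = α.degree := rfl

omit [DecidableEq ι] in
/-- If each `X l ^ N` reduces mod `I` to a polynomial of lower degree, the quotient is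
a finite-dimensional `k`-module. -/
lemma module_finite_of_reduction (I : Ideal (MvPolynomial ι k)) (N : ℕ) (hN : 0 < N)
    (ρ : ι → MvPolynomial ι k) (hρ : ∀ l, (ρ l).totalDegree < N)
    (hred : ∀ l, X l ^ N - ρ l ∈ I) :
    Module.Finite k (MvPolynomial ι k ⧸ I) := by
  classical
  set D : ℕ := Fintype.card ι * (N - 1) with hD
  set mono : (ι →₀ ℕ) → MvPolynomial ι k := fun α => monomial α (1 : k) with hmono
  set T : Submodule k (MvPolynomial ι k) :=
    Submodule.span k (mono '' {α | α.degree ≤ D}) ⊔ I.restrictScalars k with hT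
  have hmonoT : ∀ (α : ι →₀ ℕ) (c : k), α.degree ≤ D → monomial α c ∈ T := by
    intro α c hα
    have : monomial α c = c • mono α := by rw [hmono, smul_monomial, smul_eq_mul, mul_one]
    rw [this]
    exact Submodule.mem_sup_left (Submodule.smul_mem _ _
      (Submodule.subset_span ⟨α, hα, rfl⟩))
  have main : ∀ D' : ℕ, ∀ f : MvPolynomial ι k, f.totalDegree ≤ D' → f ∈ T := by
    intro D'
    induction D' using Nat.strong_induction_on with
    | _ D' ih =>
      intro f hf
      rw [← f.support_sum_monomial_coeff]
      apply Submodule.sum_mem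
      intro α hα
      have hαD' : α.degree ≤ D' := by
        rw [← degree_sum_eq]; exact le_trans (le_totalDegree hα) hf
      by_cases hle : α.degree ≤ D
      · exact hmonoT _ _ hle
      · push_neg at hle
        -- find a variable with large exponent
        have hlN : ∃ l, N ≤ α l := by
          by_contra h
          push_neg at h
          have : α.degree ≤ D := by
            rw [hD]
            calc α.degree = ∑ l ∈ α.support, α l := rfl
              _ ≤ ∑ l : ι, α l :=
                  Finset.sum_le_sum_of_subset (Finset.subset_univ _)
              _ ≤ ∑ _l : ι, (N - 1) := Finset.sum_le_sum fun l _ => by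
                  have := h l; omega
              _ = Fintype.card ι * (N - 1) := by
                  rw [Finset.sum_const, smul_eq_mul, Finset.card_univ]
          omega
        obtain ⟨l, hl⟩ := hlN
        set β : ι →₀ ℕ := α - Finsupp.single l N with hβ
        have hβα : β + Finsupp.single l N = α := by
          ext a
          simp only [Finsupp.add_apply, hβ, Finsupp.tsub_apply, Finsupp.single_apply]
          by_cases hal : l = a
          · subst hal; simp; omega
          · simp [hal]
        have hsingledeg : (Finsupp.single l N).degree = N := by
          exact Finsupp.degree_single l N
        have hβdeg : β.degree + N = α.degree := by
          have := congrArg Finsupp.degree hβα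
          rw [Finsupp.degree_eq_weight_one, map_add, ← Finsupp.degree_eq_weight_one] at this
          rwa [hsingledeg] at this
        have hmoneq : (monomial α (coeff α f) : MvPolynomial ι k)
            = monomial β (coeff α f) * X l ^ N := by
          rw [X_pow_eq_monomial, monomial_mul, mul_one, hβα]
        have hNle : N ≤ α.degree := le_trans hl (Finsupp.le_degree l α)
        have hsplit : (monomial α (coeff α f) : MvPolynomial ι k)
            = monomial β (coeff α f) * ρ l + monomial β (coeff α f) * (X l ^ N - ρ l) := by
          rw [hmoneq]; ring
        rw [hsplit]
        apply Submodule.add_mem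
        · -- lower degree: use induction
          have hdeg : (monomial β (coeff α f) * ρ l).totalDegree ≤ α.degree - 1 := by
            calc (monomial β (coeff α f) * ρ l).totalDegree
                ≤ _ + _ := totalDegree_mul _ _
              _ ≤ β.degree + (N - 1) := by
                  gcongr
                  · exact le_trans (totalDegree_monomial_le _ _) (le_of_eq rfl)
                  · have := hρ l; omega
              _ ≤ α.degree - 1 := by omega
          exact ih (α.degree - 1) (by omega) _ hdeg
        · exact Submodule.mem_sup_right (Ideal.mul_mem_left _ _ (hred l))
  -- now conclude that the quotient is spanned by finitely many monomials
  have hTtop : T = ⊤ := by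
    rw [eq_top_iff]
    intro f _
    exact main f.totalDegree f le_rfl
  set mk : MvPolynomial ι k →ₗ[k] MvPolynomial ι k ⧸ I :=
    (Ideal.Quotient.mkₐ k I).toLinearMap with hmk
  have hsurj : Function.Surjective mk := Ideal.Quotient.mkₐ_surjective k I
  have htop : Submodule.map mk T = ⊤ := by
    rw [hTtop, Submodule.map_top, LinearMap.range_eq_top]
    exact hsurj
  rw [hT, Submodule.map_sup, Submodule.map_span] at htop
  have hI0 : Submodule.map mk (I.restrictScalars k) = ⊥ := by
    rw [eq_bot_iff]
    rintro - ⟨g, hg, rfl⟩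
    simp only [Submodule.mem_bot]
    exact Ideal.Quotient.eq_zero_iff_mem.mpr hg
  rw [hI0, sup_bot_eq] at htop
  refine ⟨(Submodule.fg_def).mpr ⟨mk '' (mono '' {α | α.degree ≤ D}), ?_, htop⟩⟩
  exact ((Finsupp.finite_of_degree_le D).image _).image _

lemma key_finite [IsAlgClosed k] (s : ℕ) (hs : 1 ≤ s) (hcard : Fintype.card ι ≤ s)
    (m : ι → ℕ) (hm : ∀ u : Finset ι, u.Nonempty → ((∑ l ∈ u, m l : ℕ) : k) ≠ 0)
    (d : ℕ → k) :
    {x : ι → k | ∀ j : ℕ, 1 ≤ j → j ≤ s → ∑ l, (m l : k) * x l ^ j = d j}.Finite := by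
  classical
  set I : Ideal (MvPolynomial ι k) := Ideal.span (Set.range fun j : ↥(Finset.Icc 1 s) =>
    (∑ l', C ((m l' : k)) * X l' ^ (j : ℕ)) - C (d (j : ℕ))) with hI
  obtain ⟨N, hN, hred⟩ := exists_reduction s hs hcard m hm d
  choose ρ hρ hredI using hred
  haveI : Module.Finite k (MvPolynomial ι k ⧸ I) :=
    module_finite_of_reduction I N hN ρ hρ hredI
  haveI : Algebra.IsIntegral k (MvPolynomial ι k ⧸ I) := Algebra.IsIntegral.of_finite _ _
  have hint : ∀ l : ι, ∃ P : Polynomial k, P.Monic ∧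
      Polynomial.aeval (Ideal.Quotient.mk I (X l)) P = 0 :=
    fun l => Algebra.IsIntegral.isIntegral _
  choose P hPmonic hPzero using hint
  apply Set.Finite.subset
    (Set.Finite.pi fun l => Polynomial.finite_setOf_isRoot (hPmonic l).ne_zero)
  intro x hx
  have hsub : I ≤ RingHom.ker ((aeval x : MvPolynomial ι k →ₐ[k] k) :
      MvPolynomial ι k →+* k) := by
    rw [hI, Ideal.span_le]
    rintro - ⟨j, rfl⟩
    rw [SetLike.mem_coe, RingHom.mem_ker]
    have hj := Finset.mem_Icc.mp j.2
    have hxj := hx (j : ℕ) hj.1 hj.2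
    simp only [RingHom.coe_coe, map_sub, map_sum, map_mul, map_pow, aeval_C, aeval_X,
      Algebra.algebraMap_self, RingHom.id_apply]
    exact sub_eq_zero.mpr hxj
  have hker : ∀ a ∈ I, (aeval x : MvPolynomial ι k →ₐ[k] k) a = 0 := fun a ha => hsub ha
  set ψ : (MvPolynomial ι k ⧸ I) →ₐ[k] k := Ideal.Quotient.liftₐ I (aeval x) hker with hψ
  intro l _
  have h1 : ψ (Ideal.Quotient.mk I (X l)) = x l := by
    show (aeval x) (X l) = x l
    simp
  have h2 : Polynomial.aeval (x l) (P l) = 0 := by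
    rw [← h1, Polynomial.aeval_algHom_apply, hPzero, map_zero]
  show (P l).IsRoot (x l)
  rwa [Polynomial.IsRoot, ← Polynomial.coe_aeval_eq_eval]

omit [Field k] [Fintype ι] [DecidableEq ι] in
lemma psum_transfer {k : Type*} [Field k] (n t : ℕ) (c : ℕ → k) (w w' : Fin n → k)
    (hw : ∀ j : ℕ, 1 ≤ j → j ≤ t → (Finset.univ.val.map w).esymm j = c j)
    (hw' : ∀ j : ℕ, 1 ≤ j → j ≤ t → (Finset.univ.val.map w').esymm j = c j) :
    ∀ j : ℕ, 1 ≤ j → j ≤ t → ∑ i, w i ^ j = ∑ i, w' i ^ j := by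
  intro j
  induction j using Nat.strong_induction_on with
  | _ j ih =>
    intro h1 h2
    have haux : ∀ (v : Fin n → k) (jj : ℕ),
        aeval v (psum (Fin n) k jj) = ∑ i, v i ^ jj := by
      intro v jj
      simp [psum]
    have hid := psum_eq_mul_esymm_sub_sum (Fin n) k j (by omega)
    have hevw := congrArg (aeval w) hid
    have hevw' := congrArg (aeval w') hid
    simp only [map_sub, map_mul, map_sum, map_pow, map_neg, map_one, map_natCast,
      aeval_esymm_eq_multiset_esymm, haux] at hevw hevw'
    rw [hevw, hevw']
    congr 1
    · rw [hw j h1 h2, hw' j h1 h2]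
    · apply Finset.sum_congr rfl
      intro a ha
      simp only [Finset.mem_filter, Finset.HasAntidiagonal.mem_antidiagonal, Set.mem_Ioo] at ha
      obtain ⟨hsum, h0, hlt⟩ := ha
      rw [hw a.1 (by omega) (by omega), hw' a.1 (by omega) (by omega),
        ih a.2 (by omega) (by omega) (by omega)]

end Aux

/-- Over an algebraically closed field of characteristic `0` or `> n`, for
`1 ≤ s ≤ t ≤ n` and constants `c 1, …, c t`, the locus of `n`-tuples `w` with at most `s`
distinct coordinates and `e_n^j(w) = c j` for `1 ≤ j ≤ t` is finite. -/
theorem finite_repeatedRoots_fixedEsymm {k : Type*} [Field k] [IsAlgClosed k] (n s t : ℕ)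
    (hchar : ringChar k = 0 ∨ n < ringChar k)
    (hs : 1 ≤ s) (hst : s ≤ t) (htn : t ≤ n) (c : ℕ → k) :
    {w : Fin n → k | Set.ncard (Set.range w) ≤ s ∧
      ∀ j : ℕ, 1 ≤ j → j ≤ t → (Finset.univ.val.map w).esymm j = c j}.Finite := by
  classical
  have hn1 : 1 ≤ n := le_trans (le_trans hs hst) htn
  set S := {w : Fin n → k | Set.ncard (Set.range w) ≤ s ∧
      ∀ j : ℕ, 1 ≤ j → j ≤ t → (Finset.univ.val.map w).esymm j = c j} with hS
  rcases S.eq_empty_or_nonempty with hE | ⟨w₀, hw₀⟩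
  · rw [hE]; exact Set.finite_empty
  set d : ℕ → k := fun j => ∑ i, w₀ i ^ j with hd'
  have hd : ∀ w ∈ S, ∀ j : ℕ, 1 ≤ j → j ≤ t → ∑ i, w i ^ j = d j :=
    fun w hw j h1 h2 => psum_transfer n t c w w₀ hw.2 hw₀.2 j h1 h2
  -- the pieces of the covering
  set piece : (Fin n → Fin s) → Set (Fin n → k) := fun σ =>
    (fun y : {l // l ∈ Finset.image σ Finset.univ} → k =>
        fun i => y ⟨σ i, Finset.mem_image_of_mem σ (Finset.mem_univ i)⟩) ''
      {y : {l // l ∈ Finset.image σ Finset.univ} → k | ∀ j : ℕ, 1 ≤ j → j ≤ s →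
        ∑ l : {l // l ∈ Finset.image σ Finset.univ},
          (((Finset.univ.filter (fun i => σ i = (l : Fin s))).card : ℕ) : k) * y l ^ j
          = d j} with hpiece
  have hcover : S ⊆ ⋃ σ : Fin n → Fin s, piece σ := by
    intro w hw
    -- choose a parametrization of the values of w
    have hwfin : (Set.range w).Finite := Set.finite_range w
    set F : Finset k := hwfin.toFinset with hF
    have hFcard : F.card ≤ s := by
      rw [hF, ← Set.ncard_eq_toFinset_card (Set.range w) hwfin]
      exact hw.1
    set e := F.equivFin with he
    set x : Fin s → k := fun l => if h : (l : ℕ) < F.card then (e.symm ⟨l, h⟩ : k)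
      else w ⟨0, by omega⟩ with hx
    have hxex : ∀ i : Fin n, ∃ l : Fin s, x l = w i := by
      intro i
      have hmem : w i ∈ F := by rw [hF, Set.Finite.mem_toFinset]; exact ⟨i, rfl⟩
      have hlt : ((e ⟨w i, hmem⟩ : Fin F.card) : ℕ) < F.card := (e ⟨w i, hmem⟩).2
      refine ⟨⟨(e ⟨w i, hmem⟩ : Fin F.card), by omega⟩, ?_⟩
      rw [hx]
      simp only [dif_pos hlt]
      congr 1
      rw [show (⟨(e ⟨w i, hmem⟩ : Fin F.card), hlt⟩ : Fin F.card) = e ⟨w i, hmem⟩ from rfl,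
        Equiv.symm_apply_apply]
    set σ : Fin n → Fin s := fun i => Classical.choose (hxex i) with hσ
    have hσspec : ∀ i, x (σ i) = w i := fun i => Classical.choose_spec (hxex i)
    apply Set.mem_iUnion.mpr
    refine ⟨σ, ?_⟩
    rw [hpiece]
    refine ⟨fun l => x (l : Fin s), ?_, ?_⟩
    · intro j h1 h2
      have hsum : ∑ i, x (σ i) ^ j
          = ∑ b ∈ Finset.image σ Finset.univ,
              (Finset.univ.filter (fun i => σ i = b)).card • x b ^ j :=
        Finset.sum_comp (fun b => x b ^ j) σ
      have hxw : ∀ i, x (σ i) ^ j = w i ^ j := fun i => by rw [hσspec i]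
      rw [Finset.sum_congr rfl (fun i _ => hxw i)] at hsum
      calc ∑ l : {l // l ∈ Finset.image σ Finset.univ},
            (((Finset.univ.filter (fun i => σ i = (l : Fin s))).card : ℕ) : k)
              * x (l : Fin s) ^ j
          = ∑ b ∈ Finset.image σ Finset.univ,
              (((Finset.univ.filter (fun i => σ i = b)).card : ℕ) : k) * x b ^ j :=
            Finset.sum_coe_sort (Finset.image σ Finset.univ)
              (fun b => (((Finset.univ.filter (fun i => σ i = b)).card : ℕ) : k) * x b ^ j)
        _ = ∑ b ∈ Finset.image σ Finset.univ,
              (Finset.univ.filter (fun i => σ i = b)).card • x b ^ j := by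
            apply Finset.sum_congr rfl
            intro b _
            rw [nsmul_eq_mul]
        _ = ∑ i, w i ^ j := hsum.symm
        _ = d j := hd w hw j h1 (le_trans h2 hst)
    · funext i
      exact hσspec i
  apply Set.Finite.subset _ hcover
  apply Set.finite_iUnion
  intro σ
  apply Set.Finite.image
  apply key_finite s hs
  · calc Fintype.card {l // l ∈ Finset.image σ Finset.univ}
        = (Finset.image σ Finset.univ).card := Fintype.card_coe _
      _ ≤ Fintype.card (Fin s) := Finset.card_le_univ _
      _ = s := Fintype.card_fin s
  · intro u hu
    set Mnat : ℕ := ∑ l ∈ u, (Finset.univ.filter (fun i => σ i = (l : Fin s))).card with hM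
    have hM1 : 1 ≤ Mnat := by
      obtain ⟨l0, hl0⟩ := hu
      obtain ⟨i0, -, hi0⟩ := Finset.mem_image.mp l0.2
      have hfib : 1 ≤ (Finset.univ.filter (fun i => σ i = (l0 : Fin s))).card :=
        Finset.card_pos.mpr ⟨i0, Finset.mem_filter.mpr ⟨Finset.mem_univ _, hi0⟩⟩
      calc 1 ≤ (Finset.univ.filter (fun i => σ i = (l0 : Fin s))).card := hfib
        _ ≤ Mnat := by
            rw [hM]
            exact Finset.single_le_sum (f := fun l : {l // l ∈ Finset.image σ Finset.univ} =>
              (Finset.univ.filter (fun i => σ i = (l : Fin s))).card)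
              (fun _ _ => Nat.zero_le _) hl0
    have hMn : Mnat ≤ n := by
      calc Mnat ≤ ∑ l : {l // l ∈ Finset.image σ Finset.univ},
            (Finset.univ.filter (fun i => σ i = (l : Fin s))).card :=
          Finset.sum_le_sum_of_subset (Finset.subset_univ u)
        _ = ∑ b ∈ Finset.image σ Finset.univ,
            (Finset.univ.filter (fun i => σ i = b)).card := by
          rw [← Finset.sum_coe_sort (Finset.image σ Finset.univ)
            (fun b => (Finset.univ.filter (fun i => σ i = b)).card)]
        _ = (Finset.univ : Finset (Fin n)).card :=
          (Finset.card_eq_sum_card_fiberwise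
            (fun i _ => Finset.mem_image_of_mem σ (Finset.mem_univ i))).symm
        _ = n := by rw [Finset.card_univ, Fintype.card_fin]
    intro h0
    rw [CharP.cast_eq_zero_iff k (ringChar k) Mnat] at h0
    rcases hchar with h | h
    · rw [h, zero_dvd_iff] at h0; omega
    · have := Nat.le_of_dvd (by omega) h0; omega
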